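/- Let ν ∈ (1,2], ε > 0, Δ₁ > 0, L > 0, and suppose ε^(ν/(ν−1)) ≤ (ν/(ν−1))·(Δ₁/4)·(L/2)^(1/(ν−1)). With δ_ν = (2ε/L)^(1/(ν−1)) and y* ≥ 0 satisfying 2ε·y* ≤ Δ₁/2, define F : ℝ → ℝ by F(x) = Δ₁ − 2εx for x ≤ y*, F(x) = Δ₁ − 2εx + (L/ν)(x − y*)^ν for y* < x ≤ y* + δ_ν, and F(x) = Δ₁ − 2εy* − 2εδ_ν + (L/ν)δ_ν^ν for x > y* + δ_ν. Then F is differentiable, convex, (0, L, ν)-Hölder smooth (i.e., 0 ≤ F(x) − F(y) − F'(y)(x−y) ≤ (L/ν)|x−y|^ν for all x,y), satisfies F(x) ≥ 0 for all x, and |F'(x)| = 2ε for all x ≤ y*. -/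

import Mathlib

open intervalIntegral Real MeasureTheory NNReal

noncomputable def auxc (ystar δ x : ℝ) : ℝ := min (max (x - ystar) 0) δ

noncomputable def auxg (ε L p ystar δ x : ℝ) : ℝ := -(2*ε) + L * (auxc ystar δ x) ^ p

section aux
variable {ε L p ystar δ : ℝ}

lemma auxc_nonneg (hδ : 0 < δ) (x : ℝ) : 0 ≤ auxc ystar δ x :=
  le_min (le_max_right _ _) hδ.le

lemma auxc_le (x : ℝ) : auxc ystar δ x ≤ δ := min_le_right _ _

lemma auxc_mono : Monotone fun x => auxc ystar δ x := fun x y hxy => by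
  unfold auxc
  exact min_le_min (max_le_max (by simpa using hxy) le_rfl) le_rfl

lemma auxc_lip {x y : ℝ} (hxy : x ≤ y) : auxc ystar δ y - auxc ystar δ x ≤ y - x := by
  have hA := le_max_left (x - ystar) 0
  have hA0 := le_max_right (x - ystar) 0
  have h1 : max (y - ystar) 0 ≤ max (x - ystar) 0 + (y - x) :=
    max_le (by linarith) (by linarith)
  unfold auxc
  rcases le_total (max (x - ystar) 0) δ with h | h
  · rw [min_eq_left h]
    have := min_le_left (max (y - ystar) 0) δ
    linarith
  · rw [min_eq_right h]
    have := min_le_right (max (y - ystar) 0) δ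
    linarith

lemma auxc_zero (hδ : 0 < δ) {x : ℝ} (hx : x ≤ ystar) : auxc ystar δ x = 0 := by
  unfold auxc
  rw [max_eq_right (by linarith), min_eq_left hδ.le]

lemma auxc_mid {x : ℝ} (h1 : ystar ≤ x) (h2 : x ≤ ystar + δ) : auxc ystar δ x = x - ystar := by
  unfold auxc
  rw [max_eq_left (by linarith), min_eq_left (by linarith)]

lemma auxc_top (hδ : 0 < δ) {x : ℝ} (h : ystar + δ ≤ x) : auxc ystar δ x = δ := by
  unfold auxc
  rw [max_eq_left (by linarith), min_eq_right (by linarith)]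

lemma auxc_cont : Continuous (auxc ystar δ) :=
  (((continuous_id.sub continuous_const).max continuous_const).min continuous_const)

lemma auxg_cont (hp : 0 < p) : Continuous (auxg ε L p ystar δ) := by
  unfold auxg
  exact continuous_const.add (continuous_const.mul
    ((Real.continuous_rpow_const hp.le).comp (auxc_cont (ystar := ystar) (δ := δ))))

lemma auxg_mono (hp : 0 < p) (hL : 0 < L) (hδ : 0 < δ) :
    Monotone (auxg ε L p ystar δ) := fun x y hxy => by
  unfold auxg
  have := Real.rpow_le_rpow (auxc_nonneg hδ x) (auxc_mono (ystar := ystar) (δ := δ) hxy) hp.le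
  nlinarith

lemma auxg_left (hp : 0 < p) (hδ : 0 < δ) {x : ℝ} (hx : x ≤ ystar) :
    auxg ε L p ystar δ x = -(2*ε) := by
  unfold auxg
  rw [auxc_zero hδ hx, Real.zero_rpow hp.ne', mul_zero, add_zero]

lemma auxg_top (hL : 0 < L) (hδ : 0 < δ) (hδp : δ ^ p = 2 * ε / L) {x : ℝ}
    (hx : ystar + δ ≤ x) : auxg ε L p ystar δ x = 0 := by
  unfold auxg
  rw [auxc_top hδ hx, hδp]
  field_simp
  ring

lemma auxg_nonpos (hp : 0 < p) (hL : 0 < L) (hδ : 0 < δ) (hδp : δ ^ p = 2 * ε / L) (x : ℝ) :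
    auxg ε L p ystar δ x ≤ 0 := by
  have h1 := Real.rpow_le_rpow (auxc_nonneg hδ x) (auxc_le (ystar := ystar) x) hp.le
  rw [hδp] at h1
  unfold auxg
  have h2 : L * (2 * ε / L) = 2 * ε := by field_simp
  nlinarith

/-- subadditivity: `b^p - a^p ≤ (b-a)^p` for `0 ≤ a ≤ b`, `0 < p ≤ 1`. -/
lemma rpow_sub_le (hp : 0 < p) (hp1 : p ≤ 1) {a b : ℝ} (ha : 0 ≤ a) (hab : a ≤ b) :
    b ^ p - a ^ p ≤ (b - a) ^ p := by
  have hb : 0 ≤ b - a := by linarith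
  have key := NNReal.rpow_add_le_add_rpow a.toNNReal (b - a).toNNReal hp.le hp1
  have h2 := (NNReal.coe_le_coe).2 key
  push_cast [NNReal.coe_rpow, Real.coe_toNNReal _ ha, Real.coe_toNNReal _ hb] at h2
  have hba : a + (b - a) = b := by ring
  rw [hba] at h2
  linarith

lemma auxg_holder (hp : 0 < p) (hp1 : p ≤ 1) (hL : 0 < L) (hδ : 0 < δ) {x y : ℝ} (hxy : x ≤ y) :
    auxg ε L p ystar δ y - auxg ε L p ystar δ x ≤ L * (y - x) ^ p := by
  unfold auxg
  have h1 := rpow_sub_le hp hp1 (a := auxc ystar δ x) (b := auxc ystar δ y)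
    (auxc_nonneg hδ x) (auxc_mono (ystar := ystar) (δ := δ) hxy)
  have h2 : (auxc ystar δ y - auxc ystar δ x) ^ p ≤ (y - x) ^ p :=
    Real.rpow_le_rpow (by linarith [auxc_mono (ystar := ystar) (δ := δ) hxy])
      (auxc_lip hxy) hp.le
  nlinarith

end aux

lemma aux_int_rpow {p : ℝ} (hp : 0 < p) (L a b : ℝ) :
    (∫ t in a..b, L * (t - a) ^ p) = (L / (p + 1)) * (b - a) ^ (p + 1) := by
  rw [intervalIntegral.integral_const_mul,
    intervalIntegral.integral_comp_sub_right (fun u => u ^ p) a, sub_self,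
    integral_rpow (Or.inl (by linarith)),
    Real.zero_rpow (by linarith : (0:ℝ) < p + 1).ne']
  ring

lemma aux_int_rpow' {p : ℝ} (hp : 0 < p) (L a b : ℝ) :
    (∫ t in a..b, L * (b - t) ^ p) = (L / (p + 1)) * (b - a) ^ (p + 1) := by
  rw [intervalIntegral.integral_const_mul,
    intervalIntegral.integral_comp_sub_left (fun u => u ^ p) b, sub_self,
    integral_rpow (Or.inl (by linarith)),
    Real.zero_rpow (by linarith : (0:ℝ) < p + 1).ne']
  ring

theorem one_dim_hard_instance (ν ε Δ₁ L ystar : ℝ) (hν1 : 1 < ν) (hν2 : ν ≤ 2)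
    (hε : 0 < ε) (hΔ : 0 < Δ₁) (hL : 0 < L)
    (hsmall : ε ^ (ν / (ν - 1)) ≤ (ν / (ν - 1)) * (Δ₁ / 4) * (L / 2) ^ (1 / (ν - 1)))
    (hy0 : 0 ≤ ystar) (hy : 2 * ε * ystar ≤ Δ₁ / 2) :
    let δν : ℝ := (2 * ε / L) ^ (1 / (ν - 1))
    let F : ℝ → ℝ := fun x =>
      if x ≤ ystar then Δ₁ - 2 * ε * x
      else if x ≤ ystar + δν then Δ₁ - 2 * ε * x + (L / ν) * (x - ystar) ^ ν
      else Δ₁ - 2 * ε * ystar - 2 * ε * δν + (L / ν) * δν ^ ν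
    Differentiable ℝ F ∧
      ConvexOn ℝ Set.univ F ∧
      (∀ x y : ℝ, 0 ≤ F x - F y - deriv F y * (x - y) ∧
        F x - F y - deriv F y * (x - y) ≤ (L / ν) * |x - y| ^ ν) ∧
      (∀ x, 0 ≤ F x) ∧
      (∀ x ≤ ystar, |deriv F x| = 2 * ε) := by
  intro δν F
  have hp : 0 < ν - 1 := by linarith
  have hp1 : ν - 1 ≤ 1 := by linarith
  have hν : 0 < ν := by linarith
  have h2εL : 0 < 2 * ε / L := by positivity
  have hδd : δν = (2 * ε / L) ^ (1 / (ν - 1)) := rfl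
  have hδ : 0 < δν := Real.rpow_pos_of_pos h2εL _
  have hδp : δν ^ (ν - 1) = 2 * ε / L := by
    rw [hδd, ← Real.rpow_mul h2εL.le, one_div_mul_cancel hp.ne', Real.rpow_one]
  set g := auxg ε L (ν - 1) ystar δν with hg
  have hFdef : ∀ x, F x = if x ≤ ystar then Δ₁ - 2 * ε * x
      else if x ≤ ystar + δν then Δ₁ - 2 * ε * x + (L / ν) * (x - ystar) ^ ν
      else Δ₁ - 2 * ε * ystar - 2 * ε * δν + (L / ν) * δν ^ ν := fun x => rfl
  have hgc : Continuous g := auxg_cont hp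
  have hgint : ∀ a b : ℝ, IntervalIntegrable g MeasureTheory.volume a b :=
    fun a b => hgc.intervalIntegrable a b
  have hν1' : ν - 1 + 1 = ν := by ring
  have hcont2 : ∀ c : ℝ, Continuous fun t : ℝ => L * (t - c) ^ (ν - 1) := fun c =>
    continuous_const.mul ((Real.continuous_rpow_const hp.le).comp
      (continuous_id.sub continuous_const))
  have hcont3 : ∀ c : ℝ, Continuous fun t : ℝ => -L * (c - t) ^ (ν - 1) := fun c =>
    continuous_const.mul ((Real.continuous_rpow_const hp.le).comp
      (continuous_const.sub continuous_id))
  -- integral over the middle piece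
  have hI : ∀ x, ystar ≤ x → x ≤ ystar + δν →
      (∫ t in ystar..x, g t) = -(2 * ε) * (x - ystar) + (L / ν) * (x - ystar) ^ ν := by
    intro x h1 h2
    have hcongr : Set.EqOn g (fun t => -(2 * ε) + L * (t - ystar) ^ (ν - 1))
        (Set.uIcc ystar x) := by
      intro t ht
      rw [Set.uIcc_of_le h1] at ht
      rw [hg]; unfold auxg
      rw [auxc_mid ht.1 (le_trans ht.2 h2)]
    rw [intervalIntegral.integral_congr hcongr,
      intervalIntegral.integral_add intervalIntegrable_const
        ((hcont2 ystar).intervalIntegrable _ _),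
      intervalIntegral.integral_const, aux_int_rpow hp, hν1', smul_eq_mul]
    ring
  -- representation of F as an integral of g
  have hrepr : ∀ x, F x = (Δ₁ - 2 * ε * ystar) + ∫ t in ystar..x, g t := by
    intro x
    rcases le_or_gt x ystar with hx | hx
    · have hcongr : Set.EqOn g (fun _ => -(2 * ε)) (Set.uIcc ystar x) := by
        intro t ht
        rw [Set.uIcc_comm, Set.uIcc_of_le hx] at ht
        exact auxg_left hp hδ ht.2
      rw [intervalIntegral.integral_congr hcongr, intervalIntegral.integral_const,
        hFdef x, if_pos hx, smul_eq_mul]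
      ring
    · rcases le_or_gt x (ystar + δν) with hx2 | hx2
      · rw [hI x hx.le hx2, hFdef x, if_neg (not_le.2 hx), if_pos hx2]
        ring
      · have hsplit : (∫ t in ystar..(ystar + δν), g t) + (∫ t in (ystar + δν)..x, g t)
            = ∫ t in ystar..x, g t :=
          intervalIntegral.integral_add_adjacent_intervals (hgint _ _) (hgint _ _)
        have h2 : (∫ t in (ystar + δν)..x, g t) = 0 := by
          have hcongr : Set.EqOn g (fun _ => (0:ℝ)) (Set.uIcc (ystar + δν) x) := by
            intro t ht
            rw [Set.uIcc_of_le hx2.le] at ht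
            exact auxg_top hL hδ hδp ht.1
          rw [intervalIntegral.integral_congr hcongr]
          simp
        have h1 : (∫ t in ystar..(ystar + δν), g t) = -(2 * ε) * δν + (L / ν) * δν ^ ν := by
          have := hI (ystar + δν) (by linarith) le_rfl
          rwa [add_sub_cancel_left] at this
        rw [hFdef x, if_neg (not_le.2 hx), if_neg (not_le.2 hx2), ← hsplit, h1, h2]
        ring
  have hFeq : F = fun x => (Δ₁ - 2 * ε * ystar) + ∫ t in ystar..x, g t := funext hrepr
  have hFderiv : ∀ x, HasDerivAt F (g x) x := by
    intro x
    rw [hFeq]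
    exact (intervalIntegral.integral_hasDerivAt_right (hgint ystar x)
      (hgc.stronglyMeasurableAtFilter _ _) hgc.continuousAt).const_add _
  have hdiff : Differentiable ℝ F := fun x => (hFderiv x).differentiableAt
  have hderiv : deriv F = g := funext fun x => (hFderiv x).deriv
  -- second order difference as an integral
  have hsub : ∀ x y : ℝ, F x - F y - g y * (x - y) = ∫ t in y..x, (g t - g y) := by
    intro x y
    have h1 : (∫ t in ystar..y, g t) + (∫ t in y..x, g t) = ∫ t in ystar..x, g t :=
      intervalIntegral.integral_add_adjacent_intervals (hgint _ _) (hgint _ _)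
    have h2 : (∫ t in y..x, (g t - g y)) = (∫ t in y..x, g t) - (x - y) * g y := by
      rw [intervalIntegral.integral_sub (hgint _ _) intervalIntegrable_const,
        intervalIntegral.integral_const, smul_eq_mul]
    rw [hrepr x, hrepr y, h2, ← h1]
    ring
  have hlow : ∀ x y : ℝ, 0 ≤ F x - F y - g y * (x - y) := by
    intro x y
    rw [hsub]
    rcases le_total y x with h | h
    · exact intervalIntegral.integral_nonneg h
        (fun t ht => sub_nonneg.2 (auxg_mono hp hL hδ ht.1))
    · rw [intervalIntegral.integral_symm]
      have hle : (∫ t in x..y, (g t - g y)) ≤ ∫ t in x..y, (0:ℝ) :=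
        intervalIntegral.integral_mono_on h ((hgint _ _).sub intervalIntegrable_const)
          intervalIntegrable_const
          (fun t ht => sub_nonpos.2 (auxg_mono hp hL hδ ht.2))
      simp only [intervalIntegral.integral_zero] at hle
      linarith
  have hup : ∀ x y : ℝ, F x - F y - g y * (x - y) ≤ (L / ν) * |x - y| ^ ν := by
    intro x y
    rw [hsub]
    rcases le_total y x with h | h
    · have habs : |x - y| = x - y := abs_of_nonneg (by linarith)
      have hle : (∫ t in y..x, (g t - g y)) ≤ ∫ t in y..x, L * (t - y) ^ (ν - 1) :=
        intervalIntegral.integral_mono_on h ((hgint _ _).sub intervalIntegrable_const)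
          ((hcont2 y).intervalIntegrable _ _)
          (fun t ht => auxg_holder hp hp1 hL hδ ht.1)
      rw [aux_int_rpow hp, hν1'] at hle
      rw [habs]
      linarith
    · have habs : |x - y| = y - x := by
        rw [abs_sub_comm]; exact abs_of_nonneg (by linarith)
      have hle : (∫ t in x..y, -L * (y - t) ^ (ν - 1)) ≤ ∫ t in x..y, (g t - g y) :=
        intervalIntegral.integral_mono_on h ((hcont3 y).intervalIntegrable _ _)
          ((hgint _ _).sub intervalIntegrable_const)
          (fun t ht => by
            have := auxg_holder (ε := ε) (ystar := ystar) (δ := δν) hp hp1 hL hδ (x := t) (y := y) ht.2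
            linarith)
      rw [aux_int_rpow' hp, hν1'] at hle
      rw [intervalIntegral.integral_symm, habs]
      have : -L / ν * (y - x) ^ ν = -((L / ν) * (y - x) ^ ν) := by ring
      rw [this] at hle
      linarith
  -- nonnegativity
  have hδν : δν ^ ν = 2 * ε / L * δν := by
    rw [← hν1', Real.rpow_add hδ, hδp, Real.rpow_one]
  have key : ε * δν ≤ ν / (ν - 1) * (Δ₁ / 4) := by
    have h1 : δν = ε ^ (1 / (ν - 1)) * (2 / L) ^ (1 / (ν - 1)) := by
      rw [hδd, ← Real.mul_rpow hε.le (by positivity)]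
      congr 1
      ring
    have h2 : ε * ε ^ (1 / (ν - 1)) = ε ^ (ν / (ν - 1)) := by
      nth_rewrite 1 [← Real.rpow_one ε]
      rw [← Real.rpow_add hε]
      congr 1
      field_simp
      ring
    have h3 : (L / 2) ^ (1 / (ν - 1)) * (2 / L) ^ (1 / (ν - 1)) = 1 := by
      rw [← Real.mul_rpow (by positivity) (by positivity),
        show L / 2 * (2 / L) = 1 by field_simp, Real.one_rpow]
    calc ε * δν = ε ^ (ν / (ν - 1)) * (2 / L) ^ (1 / (ν - 1)) := by rw [h1, ← h2]; ring
      _ ≤ (ν / (ν - 1) * (Δ₁ / 4) * (L / 2) ^ (1 / (ν - 1))) * (2 / L) ^ (1 / (ν - 1)) :=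
          mul_le_mul_of_nonneg_right hsmall (by positivity)
      _ = ν / (ν - 1) * (Δ₁ / 4) * ((L / 2) ^ (1 / (ν - 1)) * (2 / L) ^ (1 / (ν - 1))) := by ring
      _ = ν / (ν - 1) * (Δ₁ / 4) := by rw [h3, mul_one]
  have h5 : (ν - 1) / ν * (ε * δν) ≤ Δ₁ / 4 := by
    have hh := mul_le_mul_of_nonneg_left key (le_of_lt (div_pos hp hν))
    have : (ν - 1) / ν * (ν / (ν - 1) * (Δ₁ / 4)) = Δ₁ / 4 := by
      field_simp
    linarith
  have hFval : 0 ≤ F (ystar + δν) := by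
    rw [hFdef, if_neg (by linarith), if_pos le_rfl, add_sub_cancel_left, hδν]
    have e1 : L / ν * (2 * ε / L * δν) = 2 * ε / ν * δν := by
      field_simp
    have e2 : 2 * ε / ν * δν - 2 * ε * δν = -(2 * ((ν - 1) / ν * (ε * δν))) := by
      field_simp
      ring
    linarith
  have hnonneg : ∀ x, 0 ≤ F x := by
    intro x
    have hl := hlow x (ystar + δν)
    rw [hg, auxg_top hL hδ hδp le_rfl, zero_mul, sub_zero] at hl
    linarith
  refine ⟨hdiff, Monotone.convexOn_univ_of_deriv hdiff
      (by rw [hderiv]; exact auxg_mono hp hL hδ), fun x y => ?_, hnonneg, fun x hx => ?_⟩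
  · rw [hderiv]
    exact ⟨hlow x y, hup x y⟩
  · rw [hderiv, hg, auxg_left hp hδ hx, abs_neg, abs_of_pos (by positivity)]
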